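/- All eigenvalues of the Seidel quotient matrix Q_S are real and simple: the characteristic polynomial of Q_S has 2k distinct real roots (equivalently, Q_S has exactly 2k distinct real eigenvalues, each of algebraic multiplicity one). -/

import Mathlib

open Polynomial Matrix

lemma my_charpoly_conj {n : Type*} [Fintype n] [DecidableEq n] {R : Type*} [CommRing R]
    (P A P' : Matrix n n R) (h : P * P' = 1) (h' : P' * P = 1) :
    (P * A * P').charpoly = A.charpoly := by
  have hPX : ∀ M : Matrix n n R[X], Matrix.scalar n (X : R[X]) * M = M * Matrix.scalar n X := by
    intro M
    exact (Matrix.scalar_commute (X : R[X]) (fun r => Commute.all _ _) M)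
  have hcm : charmatrix (P * A * P')
      = (C : R →+* R[X]).mapMatrix P * charmatrix A * (C : R →+* R[X]).mapMatrix P' := by
    unfold charmatrix
    rw [mul_sub, sub_mul]
    congr 1
    · rw [← hPX, mul_assoc, ← _root_.map_mul (C.mapMatrix), h, _root_.map_one, mul_one]
    · rw [← _root_.map_mul (C.mapMatrix), ← _root_.map_mul (C.mapMatrix)]
  rw [Matrix.charpoly, Matrix.charpoly, hcm, det_mul, det_mul]
  have hdet : ((C : R →+* R[X]).mapMatrix P).det * ((C : R →+* R[X]).mapMatrix P').det = 1 := by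
    rw [← det_mul, ← _root_.map_mul (C.mapMatrix), h, _root_.map_one, det_one]
  calc ((C : R →+* R[X]).mapMatrix P).det * (charmatrix A).det * ((C : R →+* R[X]).mapMatrix P').det
      = (charmatrix A).det * (((C : R →+* R[X]).mapMatrix P).det * ((C : R →+* R[X]).mapMatrix P').det) := by ring
    _ = (charmatrix A).det := by rw [hdet, mul_one]

lemma my_charpoly_diagonal {n : Type*} [Fintype n] [DecidableEq n] {R : Type*} [CommRing R]
    (v : n → R) : (diagonal v).charpoly = ∏ i, (X - C (v i)) := by
  have hcm : charmatrix (diagonal v) = diagonal fun i => X - C (v i) := by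
    apply Matrix.ext
    intro i j
    by_cases hij : i = j
    · subst hij
      rw [charmatrix_apply_eq, diagonal_apply_eq, diagonal_apply_eq]
    · rw [charmatrix_apply_ne _ _ _ hij, diagonal_apply_ne _ hij, diagonal_apply_ne _ hij,
        map_zero, neg_zero]
  rw [Matrix.charpoly, hcm, det_diagonal]

lemma key_lemma (k : ℕ) (hk : 1 ≤ k) (d : ℕ → ℝ) (hd : ∀ i, i < 2*k → 1 ≤ d i)
    (Q : Matrix (Fin (2*k)) (Fin (2*k)) ℝ)
    (hQ : ∀ p q : Fin (2*k), Q p q = if p = q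
      then (-1 : ℝ) ^ (p : ℕ) * (d (p : ℕ) - 1)
      else (-1 : ℝ) ^ (max (p : ℕ) (q : ℕ)) * d (q : ℕ))
    (lam : ℝ) :
    ∃ i0 : Fin (2*k), ∀ x : Fin (2*k) → ℝ,
      Q.mulVec x = lam • x → x i0 = 0 → x = 0 := by
  have hmulz : ∀ a b : ℝ, 1 ≤ a → a * b = 0 → b = 0 := by
    intro a b ha hab
    rcases mul_eq_zero.mp hab with h | h
    · linarith
    · exact h
  refine ⟨⟨if lam = 1 then 1 else 2*k-1, by by_cases h : lam = 1 <;> simp [h] <;> omega⟩, ?_⟩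
  intro x hx hx0
  set coef : ℕ → ℕ → ℝ := fun p q => if p = q then (-1 : ℝ) ^ p * (d p - 1)
    else (-1 : ℝ) ^ (max p q) * d q with hcoef
  set x' : ℕ → ℝ := fun i => if h : i < 2*k then x ⟨i, h⟩ else 0 with hx'
  have hx'eq : ∀ q : Fin (2*k), x' (q : ℕ) = x q := by
    intro q; simp [hx', q.2]
  have hceq : ∀ p, coef p p = (-1 : ℝ) ^ p * (d p - 1) := by
    intro p; simp [hcoef]
  have hcne : ∀ p q, p ≠ q → coef p q = (-1 : ℝ) ^ (max p q) * d q := by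
    intro p q h; simp [hcoef, h]
  -- the basic equations
  have hE : ∀ p, (hp : p < 2*k) →
      ∑ q ∈ Finset.range (2*k), coef p q * x' q = lam * x' p := by
    intro p hp
    have h0 := congrFun hx ⟨p, hp⟩
    rw [Matrix.mulVec, dotProduct] at h0
    have h1 : ∀ q : Fin (2*k), Q ⟨p, hp⟩ q * x q = coef p (q : ℕ) * x' (q : ℕ) := by
      intro q
      rw [hQ, hx'eq, hcoef]
      simp only [Fin.ext_iff]
    rw [Finset.sum_congr rfl (fun q _ => h1 q)] at h0
    rw [Fin.sum_univ_eq_sum_range (fun q => coef p q * x' q) (2*k)] at h0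
    rw [h0]
    simp [hx'eq ⟨p, hp⟩]
  -- the sparse difference equations
  have hF : ∀ p, p + 2 < 2*k →
      (lam + (-1 : ℝ)^p) * (x' (p+2) - x' p) = 2 * (-1:ℝ)^p * d (p+1) * x' (p+1) := by
    intro p hp
    have h1 := hE p (by omega)
    have h2 := hE (p+2) hp
    have hpow2 : ((-1:ℝ))^(p+2) = (-1:ℝ)^p := by
      rw [pow_add]; norm_num
    have hpow1 : ((-1:ℝ))^(p+1) = -((-1:ℝ)^p) := by
      rw [pow_add]; norm_num
    have hdiff : ∀ q ∈ Finset.range (2*k), coef p q * x' q - coef (p+2) q * x' q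
        = (if q = p then (-((-1:ℝ)^p)) * x' q else 0)
          + (if q = p+1 then (-2*(-1:ℝ)^p * d (p+1)) * x' q else 0)
          + (if q = p+2 then ((-1:ℝ)^p) * x' q else 0) := by
      intro q _
      by_cases e1 : q = p
      · subst e1
        rw [if_pos rfl, if_neg (by omega), if_neg (by omega)]
        rw [hceq, hcne (q+2) q (by omega), max_eq_left (by omega), hpow2]
        ring
      · by_cases e2 : q = p+1
        · subst e2
          rw [if_neg e1, if_pos rfl, if_neg (by omega)]
          rw [hcne p (p+1) (by omega), hcne (p+2) (p+1) (by omega),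
            max_eq_right (by omega), max_eq_left (by omega), hpow1, hpow2]
          ring
        · by_cases e3 : q = p+2
          · subst e3
            rw [if_neg e1, if_neg e2, if_pos rfl]
            rw [hcne p (p+2) (by omega), hceq, max_eq_right (by omega), hpow2]
            ring
          · rw [if_neg e1, if_neg e2, if_neg e3]
            rw [hcne p q (fun h => e1 h.symm), hcne (p+2) q (fun h => e3 h.symm)]
            rcases lt_or_gt_of_ne (fun h => e1 h.symm : p ≠ q) with hlt | hgt
            · rw [max_eq_right (by omega), max_eq_right (by omega)]
              ring
            · rw [max_eq_left (by omega), max_eq_left (by omega), hpow2]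
              ring
    have hsum : ∑ q ∈ Finset.range (2*k), (coef p q * x' q - coef (p+2) q * x' q)
        = (-((-1:ℝ)^p)) * x' p + (-2*(-1:ℝ)^p * d (p+1)) * x' (p+1) + ((-1:ℝ)^p) * x' (p+2) := by
      rw [Finset.sum_congr rfl hdiff]
      rw [Finset.sum_add_distrib, Finset.sum_add_distrib,
        Finset.sum_ite_eq' (Finset.range (2*k)) p,
        Finset.sum_ite_eq' (Finset.range (2*k)) (p+1),
        Finset.sum_ite_eq' (Finset.range (2*k)) (p+2),
        if_pos (Finset.mem_range.mpr (by omega)),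
        if_pos (Finset.mem_range.mpr (by omega)),
        if_pos (Finset.mem_range.mpr (by omega))]
    rw [Finset.sum_sub_distrib, h1, h2] at hsum
    linear_combination -hsum
  -- the last-row equation
  have hG1 : ∑ q ∈ Finset.range (2*k), d q * x' q = (1 - lam) * x' (2*k-1) := by
    have h1 := hE (2*k-1) (by omega)
    have hodd : ((-1:ℝ))^(2*k-1) = -1 := Odd.neg_one_pow (Nat.odd_iff.mpr (by omega))
    have hpt : ∀ q ∈ Finset.range (2*k), coef (2*k-1) q * x' q
        = -(d q * x' q) + (if q = 2*k-1 then x' q else 0) := by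
      intro q hq
      rw [Finset.mem_range] at hq
      by_cases e : q = 2*k-1
      · subst e
        rw [if_pos rfl, hceq, hodd]
        ring
      · rw [if_neg e, hcne (2*k-1) q (fun h => e h.symm), max_eq_left (by omega), hodd]
        ring
    rw [Finset.sum_congr rfl hpt, Finset.sum_add_distrib, Finset.sum_neg_distrib,
      Finset.sum_ite_eq' (Finset.range (2*k)) (2*k-1),
      if_pos (Finset.mem_range.mpr (by omega))] at h1
    linear_combination -h1
  -- second-to-last row equation combined with hG1
  have hF' : (1 + lam) * x' (2*k-2) = (1 - lam - 2 * d (2*k-1)) * x' (2*k-1) := by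
    have h1 := hE (2*k-2) (by omega)
    have heven : ((-1:ℝ))^(2*k-2) = 1 := Even.neg_one_pow (Nat.even_iff.mpr (by omega))
    have hodd : ((-1:ℝ))^(2*k-1) = -1 := Odd.neg_one_pow (Nat.odd_iff.mpr (by omega))
    have hpt : ∀ q ∈ Finset.range (2*k), coef (2*k-2) q * x' q
        = d q * x' q + (if q = 2*k-2 then -(x' q) else 0)
          + (if q = 2*k-1 then -2*d (2*k-1) * x' q else 0) := by
      intro q hq
      rw [Finset.mem_range] at hq
      by_cases e1 : q = 2*k-2
      · subst e1
        rw [if_pos rfl, if_neg (by omega), hceq, heven]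
        ring
      · by_cases e2 : q = 2*k-1
        · subst e2
          rw [if_neg e1, if_pos rfl, hcne (2*k-2) (2*k-1) (by omega),
            max_eq_right (by omega), hodd]
          ring
        · rw [if_neg e1, if_neg e2, hcne (2*k-2) q (fun h => e1 h.symm),
            max_eq_left (by omega), heven]
          ring
    rw [Finset.sum_congr rfl hpt, Finset.sum_add_distrib, Finset.sum_add_distrib,
      Finset.sum_ite_eq' (Finset.range (2*k)) (2*k-2),
      Finset.sum_ite_eq' (Finset.range (2*k)) (2*k-1),
      if_pos (Finset.mem_range.mpr (by omega)),
      if_pos (Finset.mem_range.mpr (by omega)), hG1] at h1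
    linear_combination -h1
  -- reduce goal to x' = 0
  suffices hall : ∀ i, i < 2*k → x' i = 0 by
    funext q
    have := hall (q : ℕ) q.2
    rw [hx'eq] at this
    exact this
  have hx0' : x' (if lam = 1 then 1 else 2*k-1) = 0 := by
    have h := hx0
    rw [← hx'eq] at h
    exact h
  clear hx0 hx hE
  by_cases hl1 : lam = 1
  · -- case lam = 1
    subst hl1
    rw [if_pos rfl] at hx0'
    have heven : ∀ i, 2 ≤ i → i ≤ 2*k-2 → Even i → x' i = 0 := by
      intro i h2 hle hev
      have hj := Nat.even_iff.mp hev
      have hf := hF (i-1) (by omega)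
      have hodd : ((-1:ℝ))^(i-1) = -1 := Odd.neg_one_pow (Nat.odd_iff.mpr (by omega))
      rw [hodd, show i-1+2 = i+1 by omega, show i-1+1 = i by omega] at hf
      exact hmulz (d i) (x' i) (hd i (by omega)) (by linear_combination (1/2) * hf)
    by_cases hk1 : k = 1
    · subst hk1
      have hF2 : (1 + (1:ℝ)) * x' 0 = (1 - 1 - 2 * d 1) * x' 1 := by
        have e1 : 2*1-2 = 0 := by norm_num
        have e2 : 2*1-1 = 1 := by norm_num
        rw [e1, e2] at hF'
        exact hF'
      intro i hi
      interval_cases i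
      · linear_combination (1/2) * hF2 - d 1 * hx0'
      · exact hx0'
    · have hk2 : 2 ≤ k := by omega
      have hx2 : x' 2 = 0 := heven 2 (by omega) (by omega) (Nat.even_iff.mpr (by omega))
      have hx00 : x' 0 = 0 := by
        have hf := hF 0 (by omega)
        rw [pow_zero] at hf
        linear_combination (-1/2) * hf + hx2 - d 1 * hx0'
      have hxn1 : x' (2*k-1) = 0 := by
        have h2 : x' (2*k-2) = 0 := heven (2*k-2) (by omega) (by omega) (Nat.even_iff.mpr (by omega))
        exact hmulz (d (2*k-1)) (x' (2*k-1)) (hd (2*k-1) (by omega))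
          (by linear_combination (1/2) * hF' - h2)
      have hoddc : ∀ i, 3 ≤ i → i ≤ 2*k-3 → Odd i → x' i = 0 := by
        intro i h3 hle ho
        have hj := Nat.odd_iff.mp ho
        have hf := hF (i-1) (by omega)
        have hev : ((-1:ℝ))^(i-1) = 1 := Even.neg_one_pow (Nat.even_iff.mpr (by omega))
        rw [hev, show i-1+2 = i+1 by omega, show i-1+1 = i by omega] at hf
        have hxm : x' (i-1) = 0 := heven (i-1) (by omega) (by omega) (Nat.even_iff.mpr (by omega))
        have hxp : x' (i+1) = 0 := heven (i+1) (by omega) (by omega) (Nat.even_iff.mpr (by omega))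
        exact hmulz (d i) (x' i) (hd i (by omega))
          (by linear_combination (-1/2) * hf + hxp - hxm)
      intro i hi
      rcases Nat.even_or_odd i with he | ho
      · have hj := Nat.even_iff.mp he
        rcases Nat.lt_or_ge i 2 with h | h
        · have h0 : i = 0 := by omega
          rw [h0]; exact hx00
        · exact heven i h (by omega) he
      · have hj := Nat.odd_iff.mp ho
        by_cases h1 : i = 1
        · rw [h1]; exact hx0'
        · by_cases h2 : i = 2*k-1
          · rw [h2]; exact hxn1
          · exact hoddc i (by omega) (by omega) ho
  · -- lam ≠ 1
    rw [if_neg hl1] at hx0'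
    by_cases hlm : lam = -1
    · subst hlm
      have hoddc : ∀ i, Odd i → i < 2*k → x' i = 0 := by
        intro i ho hi
        have hj := Nat.odd_iff.mp ho
        by_cases he : i = 2*k-1
        · rw [he]; exact hx0'
        · have hf := hF (i-1) (by omega)
          have hev : ((-1:ℝ))^(i-1) = 1 := Even.neg_one_pow (Nat.even_iff.mpr (by omega))
          rw [hev, show i-1+2 = i+1 by omega, show i-1+1 = i by omega] at hf
          exact hmulz (d i) (x' i) (hd i hi) (by linear_combination (-1/2) * hf)
      have hevenc : ∀ i, 2 ≤ i → Even i → i < 2*k → x' i = 0 := by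
        intro i h2 hev hi
        have hj := Nat.even_iff.mp hev
        have hf := hF (i-1) (by omega)
        have hodd : ((-1:ℝ))^(i-1) = -1 := Odd.neg_one_pow (Nat.odd_iff.mpr (by omega))
        rw [hodd, show i-1+2 = i+1 by omega, show i-1+1 = i by omega] at hf
        have hxm : x' (i-1) = 0 := hoddc (i-1) (Nat.odd_iff.mpr (by omega)) (by omega)
        have hxp : x' (i+1) = 0 := hoddc (i+1) (Nat.odd_iff.mpr (by omega)) (by omega)
        exact hmulz (d i) (x' i) (hd i hi)
          (by linear_combination (1/2) * hf + hxp - hxm)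
      have hx00 : x' 0 = 0 := by
        have hsum : ∑ q ∈ Finset.range (2*k), d q * x' q = d 0 * x' 0 := by
          refine Finset.sum_eq_single 0 ?_ ?_
          · intro q hq hq0
            rw [Finset.mem_range] at hq
            rcases Nat.even_or_odd q with he | ho
            · rw [hevenc q (by have := Nat.even_iff.mp he; omega) he hq]; ring
            · rw [hoddc q ho hq]; ring
          · intro h
            exact absurd (Finset.mem_range.mpr (by omega)) h
        rw [hsum] at hG1
        exact hmulz (d 0) (x' 0) (hd 0 (by omega))
          (by linear_combination hG1 + 2 * hx0')
      intro i hi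
      rcases Nat.even_or_odd i with he | ho
      · by_cases h0 : i = 0
        · rw [h0]; exact hx00
        · exact hevenc i (by have := Nat.even_iff.mp he; omega) he hi
      · exact hoddc i ho hi
    · -- lam ≠ 1, lam ≠ -1 : backward recurrence
      have hlam1 : lam + 1 ≠ 0 := fun h => hlm (by linarith)
      have hlam2 : lam - 1 ≠ 0 := fun h => hl1 (by linarith)
      have hmain : ∀ m, m < 2*k → x' (2*k-1-m) = 0 := by
        intro m
        induction m using Nat.strong_induction_on with
        | _ m ih =>
          intro hm
          match m, hm with
          | 0, _ => exact hx0'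
          | 1, h1 =>
            have h0 : (1 + lam) * x' (2*k-2) = 0 := by
              linear_combination hF' + (1 - lam - 2*d (2*k-1)) * hx0'
            rcases mul_eq_zero.mp h0 with h | h
            · exact absurd (by linarith : lam + 1 = 0) hlam1
            · rw [show 2*k-1-1 = 2*k-2 by omega]
              exact h
          | (m+2), hm2 =>
            have hp : (2*k-1-(m+2)) + 2 < 2*k := by omega
            have hf := hF (2*k-1-(m+2)) hp
            have e1 : 2*k-1-(m+2)+1 = 2*k-1-(m+1) := by omega
            have e2 : 2*k-1-(m+2)+2 = 2*k-1-m := by omega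
            rw [e1, e2, ih (m+1) (by omega) (by omega), ih m (by omega) (by omega)] at hf
            rcases Nat.even_or_odd (2*k-1-(m+2)) with he | ho
            · rw [he.neg_one_pow] at hf
              have h0 : (lam + 1) * x' (2*k-1-(m+2)) = 0 := by linear_combination -hf
              rcases mul_eq_zero.mp h0 with h | h
              · exact absurd h hlam1
              · exact h
            · rw [ho.neg_one_pow] at hf
              have h0 : (lam - 1) * x' (2*k-1-(m+2)) = 0 := by linear_combination -hf
              rcases mul_eq_zero.mp h0 with h | h
              · exact absurd h hlam2
              · exact h
      intro i hi
      have h := hmain (2*k-1-i) (by omega)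
      rw [show 2*k-1-(2*k-1-i) = i by omega] at h
      exact h

theorem stmt_7
    (k : ℕ) (hk : 1 ≤ k) (s t : ℕ → ℕ)
    (hs : ∀ i, 1 ≤ i → i ≤ k → 1 ≤ s i) (ht : ∀ i, 1 ≤ i → i ≤ k → 1 ≤ t i)
    (c : ℕ → ℕ)
    (hc : ∀ i, 1 ≤ i → i ≤ k → c (2 * i - 1) = s i ∧ c (2 * i) = t i)
    (Q : Matrix (Fin (2 * k)) (Fin (2 * k)) ℝ)
    (hQ : ∀ p q : Fin (2 * k), Q p q = if p = q
      then (-1 : ℝ) ^ (p : ℕ) * ((c ((p : ℕ) + 1) : ℝ) - 1)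
      else (-1 : ℝ) ^ (max (p : ℕ) (q : ℕ)) * (c ((q : ℕ) + 1) : ℝ)) :
    ∃ f : Fin (2 * k) → ℝ, Function.Injective f ∧
      Q.charpoly = ∏ i : Fin (2 * k), (X - C (f i)) := by
  classical
  -- real entry sizes
  have hd : ∀ i, i < 2*k → (1:ℝ) ≤ ((c (i+1) : ℝ)) := by
    intro i hi
    have h1 : 1 ≤ c (i+1) := by
      rcases Nat.even_or_odd (i+1) with he | ho
      · have hj := Nat.even_iff.mp he
        have hj2 : 2*((i+1)/2) = i+1 := by omega
        have h3 := (hc ((i+1)/2) (by omega) (by omega)).2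
        rw [hj2] at h3
        rw [h3]
        exact ht _ (by omega) (by omega)
      · have hj := Nat.odd_iff.mp ho
        have hj2 : 2*((i+2)/2) - 1 = i+1 := by omega
        have h3 := (hc ((i+2)/2) (by omega) (by omega)).1
        rw [hj2] at h3
        rw [h3]
        exact hs _ (by omega) (by omega)
    exact_mod_cast h1
  set d : ℕ → ℝ := fun i => ((c (i+1) : ℝ)) with hdd
  have hQ' : ∀ p q : Fin (2*k), Q p q = if p = q
      then (-1 : ℝ) ^ (p : ℕ) * (d (p : ℕ) - 1)
      else (-1 : ℝ) ^ (max (p : ℕ) (q : ℕ)) * d (q : ℕ) := hQ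
  -- diagonal conjugation to a symmetric matrix
  set e : Fin (2*k) → ℝ := fun p => Real.sqrt (d (p : ℕ)) with hee
  have hdpos : ∀ p : Fin (2*k), (0:ℝ) < d (p : ℕ) := fun p => by
    have := hd (p : ℕ) p.2; simp only [hdd] at this ⊢; linarith
  have hepos : ∀ p, 0 < e p := fun p => Real.sqrt_pos.mpr (hdpos p)
  have hee2 : ∀ p, e p * e p = d (p : ℕ) := fun p => Real.mul_self_sqrt (hdpos p).le
  set D : Matrix (Fin (2*k)) (Fin (2*k)) ℝ := diagonal e with hD
  set D' : Matrix (Fin (2*k)) (Fin (2*k)) ℝ := diagonal (fun p => (e p)⁻¹) with hD'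
  have hDD' : D * D' = 1 := by
    rw [hD, hD', diagonal_mul_diagonal,
      show (fun p => e p * (e p)⁻¹) = fun _ => (1:ℝ) from
        funext fun p => mul_inv_cancel₀ (hepos p).ne', diagonal_one]
  have hD'D : D' * D = 1 := by
    rw [hD, hD', diagonal_mul_diagonal,
      show (fun p => (e p)⁻¹ * e p) = fun _ => (1:ℝ) from
        funext fun p => inv_mul_cancel₀ (hepos p).ne', diagonal_one]
  set S : Matrix (Fin (2*k)) (Fin (2*k)) ℝ := D * Q * D' with hS'
  have hSentry : ∀ p q, S p q = e p * Q p q * (e q)⁻¹ := by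
    intro p q
    rw [hS', Matrix.mul_diagonal, Matrix.diagonal_mul]
  have hS : S.IsHermitian := by
    rw [Matrix.IsHermitian]
    ext p q
    rw [conjTranspose_apply, hSentry, hSentry, star_trivial]
    by_cases hpq : p = q
    · subst hpq; rfl
    · rw [hQ' q p, hQ' p q, if_neg (Ne.symm hpq), if_neg hpq,
        max_comm (q : ℕ) (p : ℕ)]
      have h1 := hee2 p
      have h2 := hee2 q
      have hp := hepos p
      have hq := hepos q
      field_simp
      linear_combination d (p:ℕ) * h2
        - d (q:ℕ) * h1
  have hQeq : Q = D' * S * D := by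
    rw [hS']
    simp only [← mul_assoc]
    rw [hD'D, one_mul, mul_assoc, hD'D, mul_one]
  have hQcp : Q.charpoly = S.charpoly := by
    rw [hQeq, my_charpoly_conj D' S D hD'D hDD']
  have hU1 : (hS.eigenvectorUnitary : Matrix (Fin (2*k)) (Fin (2*k)) ℝ)
      * star (hS.eigenvectorUnitary : Matrix (Fin (2*k)) (Fin (2*k)) ℝ) = 1 :=
    Matrix.mem_unitaryGroup_iff.mp (hS.eigenvectorUnitary).2
  have hU2 : star (hS.eigenvectorUnitary : Matrix (Fin (2*k)) (Fin (2*k)) ℝ)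
      * (hS.eigenvectorUnitary : Matrix (Fin (2*k)) (Fin (2*k)) ℝ) = 1 :=
    Matrix.mem_unitaryGroup_iff'.mp (hS.eigenvectorUnitary).2
  have hcp2 : S.charpoly = ∏ i, (X - C (hS.eigenvalues i)) := by
    conv_lhs => rw [hS.spectral_theorem]
    rw [Unitary.conjStarAlgAut_apply, my_charpoly_conj _ _ _ hU1 hU2]
    rw [show (RCLike.ofReal ∘ hS.eigenvalues : Fin (2*k) → ℝ) = hS.eigenvalues by
      rw [RCLike.ofReal_real_eq_id]; rfl]
    exact my_charpoly_diagonal _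
  refine ⟨hS.eigenvalues, ?_, by rw [hQcp, hcp2]⟩
  -- injectivity
  intro i j hij
  by_contra hne
  obtain ⟨i0, hkey⟩ := key_lemma k hk d hd Q hQ' (hS.eigenvalues i)
  set lam := hS.eigenvalues i with hlam
  set vI : Fin (2*k) → ℝ := fun q => hS.eigenvectorBasis i q with hvI'
  set vJ : Fin (2*k) → ℝ := fun q => hS.eigenvectorBasis j q with hvJ'
  have hvI : S *ᵥ vI = lam • vI := hS.mulVec_eigenvectorBasis i
  have hvJ : S *ᵥ vJ = lam • vJ := by
    rw [hij]; exact hS.mulVec_eigenvectorBasis j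
  set xI : Fin (2*k) → ℝ := D' *ᵥ vI with hxI'
  set xJ : Fin (2*k) → ℝ := D' *ᵥ vJ with hxJ'
  have hQx : ∀ (v xv : Fin (2*k) → ℝ), S *ᵥ v = lam • v → xv = D' *ᵥ v →
      Q *ᵥ xv = lam • xv := by
    intro v xv hv hxv
    rw [hxv, hQeq, mulVec_mulVec, mul_assoc (D' * S) D D', hDD', mul_one,
      ← mulVec_mulVec, hv, mulVec_smul]
  have hQxI : Q *ᵥ xI = lam • xI := hQx vI xI hvI hxI'
  have hQxJ : Q *ᵥ xJ = lam • xJ := hQx vJ xJ hvJ hxJ'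
  set a : ℝ := xJ i0 with ha'
  set b : ℝ := xI i0 with hb'
  have hz : a • xI - b • xJ = 0 := by
    apply hkey
    · rw [mulVec_sub, mulVec_smul, mulVec_smul, hQxI, hQxJ, smul_comm a lam,
        smul_comm b lam, ← smul_sub]
    · have e1 : xI i0 = b := rfl
      have e2 : xJ i0 = a := rfl
      simp only [Pi.sub_apply, Pi.smul_apply, smul_eq_mul, e1, e2]
      ring
  have hDxI : D *ᵥ xI = vI := by
    rw [hxI', mulVec_mulVec, hDD', one_mulVec]
  have hDxJ : D *ᵥ xJ = vJ := by
    rw [hxJ', mulVec_mulVec, hDD', one_mulVec]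
  have hz2 : a • vI = b • vJ := by
    have h0 : D *ᵥ (a • xI - b • xJ) = 0 := by rw [hz, mulVec_zero]
    rw [mulVec_sub, mulVec_smul, mulVec_smul, hDxI, hDxJ, sub_eq_zero] at h0
    exact h0
  have hzq : ∀ q, a * vI q = b * vJ q := fun q => congrFun hz2 q
  -- orthonormality
  have hON := hS.eigenvectorBasis.orthonormal
  have hsum1 : ∑ q, vI q * vI q = 1 := by
    have h0 : (inner ℝ (hS.eigenvectorBasis i) (hS.eigenvectorBasis i) : ℝ) = 1 := by
      rw [real_inner_self_eq_norm_mul_norm, hON.1 i]; norm_num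
    simp only [PiLp.inner_apply, RCLike.inner_apply, starRingEnd_apply, star_trivial] at h0
    exact h0
  have hsum1' : ∑ q, vJ q * vJ q = 1 := by
    have h0 : (inner ℝ (hS.eigenvectorBasis j) (hS.eigenvectorBasis j) : ℝ) = 1 := by
      rw [real_inner_self_eq_norm_mul_norm, hON.1 j]; norm_num
    simp only [PiLp.inner_apply, RCLike.inner_apply, starRingEnd_apply, star_trivial] at h0
    exact h0
  have hsum2 : ∑ q, vI q * vJ q = 0 := by
    have h0 : (inner ℝ (hS.eigenvectorBasis i) (hS.eigenvectorBasis j) : ℝ) = 0 := hON.2 hne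
    simp only [PiLp.inner_apply, RCLike.inner_apply, starRingEnd_apply, star_trivial] at h0
    rw [← h0]
    exact Finset.sum_congr rfl fun q _ => mul_comm _ _
  have hsum2' : ∑ q, vJ q * vI q = 0 := by
    rw [← hsum2]
    exact Finset.sum_congr rfl fun q _ => mul_comm _ _
  have ha0 : a = 0 := by
    have h0 : a * (∑ q, vI q * vI q) = b * (∑ q, vI q * vJ q) := by
      rw [Finset.mul_sum, Finset.mul_sum]
      refine Finset.sum_congr rfl fun q _ => ?_
      calc a * (vI q * vI q) = vI q * (a * vI q) := by ring
        _ = vI q * (b * vJ q) := by rw [hzq]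
        _ = b * (vI q * vJ q) := by ring
    rw [hsum1, hsum2] at h0
    simpa using h0
  have hb0 : b = 0 := by
    have h0 : b * (∑ q, vJ q * vJ q) = a * (∑ q, vJ q * vI q) := by
      rw [Finset.mul_sum, Finset.mul_sum]
      refine Finset.sum_congr rfl fun q _ => ?_
      calc b * (vJ q * vJ q) = vJ q * (b * vJ q) := by ring
        _ = vJ q * (a * vI q) := by rw [hzq]
        _ = a * (vJ q * vI q) := by ring
    rw [hsum1', hsum2'] at h0
    simpa using h0
  have hxI0 : xI = 0 := hkey xI hQxI hb0
  have hvI0 : vI = 0 := by rw [← hDxI, hxI0, mulVec_zero]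
  rw [hvI0] at hsum1
  simp at hsum1
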